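/- arXiv:2201.12453 — 3 statements merged into one kernel-verified Lean document; each statement's English description precedes it below -/
import Mathlib

section
/- For every integer x, exactly one of the following holds: (i) D_p^i(x) = 0 for all sufficiently large i; (ii) there exists an integer a coprime to p such that D_p^i(x) = a·p^p for all sufficiently large i; (iii) |D_p^i(x)| tends to infinity as i → ∞. -/
def Dp (p : ℕ) (x : ℤ) : ℤ := (x / p) * padicValInt p x

section Aux

variable {p : ℕ}

lemma Dp_zero : Dp p 0 = 0 := by simp [Dp]

lemma Dp_iter_zero (k : ℕ) : (Dp p)^[k] 0 = 0 := Function.iterate_fixed Dp_zero k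

lemma Dp_val_zero {y : ℤ} (h : padicValInt p y = 0) : Dp p y = 0 := by simp [Dp, h]

lemma Dp_fixed (hp : p.Prime) {y : ℤ} (h : padicValInt p y = p) : Dp p y = y := by
  haveI : Fact p.Prime := ⟨hp⟩
  have hdvd : (p : ℤ) ∣ y := by
    refine dvd_trans (dvd_pow_self (p : ℤ) ?_) (padicValInt_dvd y)
    rw [h]; exact hp.ne_zero
  rw [Dp, h, Int.ediv_mul_cancel hdvd]

lemma Dp_mul_decomp (hp : p.Prime) {y : ℤ} (hy : y ≠ 0) (h0 : 0 < padicValInt p y) :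
    ∃ q : ℤ, q ≠ 0 ∧ y = p * q ∧ Dp p y = q * (padicValInt p y : ℤ) ∧
      padicValInt p q = padicValInt p y - 1 := by
  haveI : Fact p.Prime := ⟨hp⟩
  have hdvd : (p : ℤ) ∣ y := dvd_trans (dvd_pow_self (p : ℤ) h0.ne') (padicValInt_dvd y)
  obtain ⟨q, hq⟩ := hdvd
  have hpz : (p : ℤ) ≠ 0 := Int.natCast_ne_zero.mpr hp.ne_zero
  have hq0 : q ≠ 0 := by rintro rfl; simp at hq; exact hy hq
  have hyd : y / p = q := by rw [hq, Int.mul_ediv_cancel_left q hpz]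
  refine ⟨q, hq0, hq, by rw [Dp, hyd], ?_⟩
  have : padicValInt p y = 1 + padicValInt p q := by
    rw [hq, padicValInt.mul hpz hq0, padicValInt_self]
  omega

lemma Dp_step (hp : p.Prime) {y : ℤ} (hy : y ≠ 0) (h0 : 0 < padicValInt p y)
    (hlt : padicValInt p y < p) :
    Dp p y ≠ 0 ∧ padicValInt p (Dp p y) = padicValInt p y - 1 := by
  haveI : Fact p.Prime := ⟨hp⟩
  obtain ⟨q, hq0, hq, hD, hvq⟩ := Dp_mul_decomp hp hy h0
  have hvz : ((padicValInt p y : ℤ)) ≠ 0 := by exact_mod_cast h0.ne'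
  have hvv : padicValInt p ((padicValInt p y : ℤ)) = 0 := by
    have hnd : ¬ p ∣ padicValInt p y := Nat.not_dvd_of_pos_of_lt h0 hlt
    rw [padicValInt.of_nat]
    exact padicValNat.eq_zero_of_not_dvd hnd
  constructor
  · rw [hD]; exact mul_ne_zero hq0 hvz
  · rw [hD, padicValInt.mul hq0 hvz, hvq, hvv]
    omega

lemma Dp_grow (hp : p.Prime) {y : ℤ} (hy : y ≠ 0) (hv : p < padicValInt p y) :
    Dp p y ≠ 0 ∧ |y| < |Dp p y| := by
  obtain ⟨q, hq0, hq, hD, _⟩ := Dp_mul_decomp hp hy (lt_of_le_of_lt (Nat.zero_le p) hv)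
  have hvz : ((padicValInt p y : ℤ)) ≠ 0 := by
    exact_mod_cast (lt_of_le_of_lt (Nat.zero_le p) hv).ne'
  refine ⟨by rw [hD]; exact mul_ne_zero hq0 hvz, ?_⟩
  have hqpos : 0 < |q| := abs_pos.mpr hq0
  have : |y| = |q| * p := by
    rw [hq, abs_mul, Int.abs_natCast, mul_comm]
  rw [this, hD, abs_mul, Int.abs_natCast]
  exact mul_lt_mul_of_pos_left (by exact_mod_cast hv) hqpos

lemma Dp_reach_zero (hp : p.Prime) :
    ∀ n, ∀ y : ℤ, padicValInt p y ≤ n → n < p → (Dp p)^[n + 1] y = 0 := by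
  intro n
  induction n with
  | zero =>
    intro y hle _
    simpa using Dp_val_zero (Nat.le_zero.mp hle)
  | succ n ih =>
    intro y hle hlt
    by_cases h0 : padicValInt p y = 0
    · rw [Function.iterate_succ_apply, Dp_val_zero h0, Dp_iter_zero]
    · have hy : y ≠ 0 := by rintro rfl; simp [padicValInt] at h0
      obtain ⟨_, hstep⟩ := Dp_step hp hy (Nat.pos_of_ne_zero h0) (lt_of_le_of_lt hle hlt)
      rw [Function.iterate_succ_apply]
      exact ih (Dp p y) (by omega) (by omega)

end Aux

theorem trichotomy (p : ℕ) (hp : p.Prime) (x : ℤ) :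
    ((∃ N, ∀ i, N ≤ i → (Dp p)^[i] x = 0) ∧
      ¬ (∃ a : ℤ, IsCoprime a (p : ℤ) ∧ ∃ N, ∀ i, N ≤ i → (Dp p)^[i] x = a * (p : ℤ) ^ p) ∧
      ¬ Filter.Tendsto (fun i => |(Dp p)^[i] x|) Filter.atTop Filter.atTop) ∨
    (¬ (∃ N, ∀ i, N ≤ i → (Dp p)^[i] x = 0) ∧
      (∃ a : ℤ, IsCoprime a (p : ℤ) ∧ ∃ N, ∀ i, N ≤ i → (Dp p)^[i] x = a * (p : ℤ) ^ p) ∧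
      ¬ Filter.Tendsto (fun i => |(Dp p)^[i] x|) Filter.atTop Filter.atTop) ∨
    (¬ (∃ N, ∀ i, N ≤ i → (Dp p)^[i] x = 0) ∧
      ¬ (∃ a : ℤ, IsCoprime a (p : ℤ) ∧ ∃ N, ∀ i, N ≤ i → (Dp p)^[i] x = a * (p : ℤ) ^ p) ∧
      Filter.Tendsto (fun i => |(Dp p)^[i] x|) Filter.atTop Filter.atTop) := by
  haveI : Fact p.Prime := ⟨hp⟩
  set f : ℕ → ℤ := fun i => (Dp p)^[i] x with hf
  have hshift : ∀ i j, i ≤ j → f j = (Dp p)^[j - i] (f i) := by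
    intro i j hij
    simp only [hf, ← Function.iterate_add_apply]
    congr 1
    omega
  by_cases hA : ∃ i, f i = 0
  · -- case (i)
    obtain ⟨i, hi⟩ := hA
    have hzero : ∀ j, i ≤ j → f j = 0 := by
      intro j hij
      rw [hshift i j hij, hi, Dp_iter_zero]
    left
    refine ⟨⟨i, hzero⟩, ?_, ?_⟩
    · rintro ⟨a, hcop, N, hN⟩
      have ha0 : a ≠ 0 := by
        rintro rfl
        have hu := isCoprime_zero_left.mp hcop
        rw [Int.isUnit_iff] at hu
        have := hp.one_lt
        omega
      have h1 := hN (max i N) (le_max_right _ _)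
      have h0 : (Dp p)^[max i N] x = 0 := hzero (max i N) (le_max_left _ _)
      rw [h0] at h1
      have : a * (p : ℤ) ^ p ≠ 0 :=
        mul_ne_zero ha0 (pow_ne_zero _ (Int.natCast_ne_zero.mpr hp.ne_zero))
      exact this h1.symm
    · intro ht
      obtain ⟨M, hM⟩ := Filter.eventually_atTop.mp (ht.eventually_ge_atTop 1)
      have h1 := hM (max i M) (le_max_right _ _)
      have h0 : (Dp p)^[max i M] x = 0 := hzero (max i M) (le_max_left _ _)
      rw [h0] at h1
      simp at h1
  · push_neg at hA
    by_cases hB : ∃ i, padicValInt p (f i) = p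
    · -- case (ii)
      obtain ⟨i, hi⟩ := hB
      have hconst : ∀ j, i ≤ j → f j = f i := by
        intro j hij
        rw [hshift i j hij]
        exact Function.iterate_fixed (Dp_fixed hp hi) _
      set c : ℤ := f i with hc
      have hc0 : c ≠ 0 := hA i
      have hdvd : (p : ℤ) ^ p ∣ c := by
        rw [padicValInt_dvd_iff]
        exact Or.inr hi.ge
      obtain ⟨a, ha⟩ := hdvd
      have hcop : IsCoprime a (p : ℤ) := by
        have hprime : Prime (p : ℤ) := Nat.prime_iff_prime_int.mp hp
        refine ((hprime.coprime_iff_not_dvd).mpr ?_).symm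
        rintro ⟨b, rfl⟩
        have : (p : ℤ) ^ (p + 1) ∣ c := ⟨b, by rw [ha]; ring⟩
        rw [padicValInt_dvd_iff, hi] at this
        rcases this with h | h
        · exact hc0 h
        · omega
      right; left
      refine ⟨?_, ⟨a, hcop, i, fun j hj => by
        have h0 : (Dp p)^[j] x = c := hconst j hj
        rw [h0, ha]; ring⟩, ?_⟩
      · rintro ⟨N, hN⟩
        exact hA (max i N) (hN _ (le_max_right _ _))
      · intro ht
        obtain ⟨M, hM⟩ := Filter.eventually_atTop.mp (ht.eventually_ge_atTop (|c| + 1))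
        have h1 := hM (max i M) (le_max_right _ _)
        have h0 : (Dp p)^[max i M] x = c := hconst (max i M) (le_max_left _ _)
        rw [h0] at h1
        omega
    · -- case (iii)
      push_neg at hB
      have hgt : ∀ i, p < padicValInt p (f i) := by
        intro i
        by_contra hle
        push_neg at hle
        have hlt : padicValInt p (f i) < p := lt_of_le_of_ne hle (hB i)
        have := Dp_reach_zero hp (padicValInt p (f i)) (f i) le_rfl hlt
        have hz : f (padicValInt p (f i) + 1 + i) = 0 := by
          show (Dp p)^[padicValInt p (f i) + 1 + i] x = 0
          rw [Function.iterate_add_apply]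
          exact this
        exact hA _ hz
      have hmono : ∀ i, |f i| < |f (i + 1)| := by
        intro i
        have := Dp_grow hp (hA i) (hgt i)
        have hstep : f (i + 1) = Dp p (f i) := by
          rw [hf]; exact Function.iterate_succ_apply' _ _ _
        rw [hstep]
        exact this.2
      have hge : ∀ i : ℕ, (i : ℤ) ≤ |f i| := by
        intro i
        induction i with
        | zero => simp only [Nat.cast_zero]; exact abs_nonneg (f 0)
        | succ n ih =>
          have := hmono n
          push_cast
          omega
      have ht : Filter.Tendsto (fun i => |f i|) Filter.atTop Filter.atTop :=
        Filter.tendsto_atTop_mono hge tendsto_natCast_atTop_atTop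
      right; right
      refine ⟨?_, ?_, ht⟩
      · rintro ⟨N, hN⟩
        exact hA N (hN N le_rfl)
      · rintro ⟨a, _, N, hN⟩
        have h1 : f N = a * (p : ℤ) ^ p := hN N le_rfl
        have h2 : f (N + 1) = a * (p : ℤ) ^ p := hN (N + 1) (by omega)
        have := hmono N
        rw [h1, h2] at this
        exact lt_irrefl _ this
end

section
/- Let y = a_0·p^{ℓ_0} with p ∤ a_0 and ℓ_0 > 0, and let x = a·p^{b·p^k} with p ∤ ab, b > 0, k ≥ 0, a ≠ 0. Then D_p(x) = y if and only if ab = a_0 and b·p^k + k − 1 = ℓ_0. -/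
lemma padicValInt_unit_mul_pow (p : ℕ) (hp : p.Prime) {u : ℤ} (hu : ¬ (p : ℤ) ∣ u) (m : ℕ) :
    padicValInt p (u * (p : ℤ) ^ m) = m := by
  haveI : Fact p.Prime := ⟨hp⟩
  have hu0 : u ≠ 0 := by rintro rfl; exact hu (dvd_zero _)
  have hpne : ((p : ℤ)) ^ m ≠ 0 := pow_ne_zero _ (by exact_mod_cast hp.ne_zero)
  rw [padicValInt.mul hu0 hpne, padicValInt.eq_zero_of_not_dvd hu]
  have : padicValInt p ((p : ℤ) ^ m) = padicValNat p (p ^ m) := by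
    rw [show ((p : ℤ) ^ m) = ((p ^ m : ℕ) : ℤ) by push_cast; ring, padicValInt.of_nat]
  rw [this, padicValNat.prime_pow]
  simp

lemma unit_mul_pow_eq_iff (p : ℕ) (hp : p.Prime) {u v : ℤ} (hu : ¬ (p : ℤ) ∣ u)
    (hv : ¬ (p : ℤ) ∣ v) {m n : ℕ} : u * (p : ℤ) ^ m = v * (p : ℤ) ^ n ↔ u = v ∧ m = n := by
  constructor
  · intro h
    have hmn : m = n := by
      have := congrArg (padicValInt p) h
      rwa [padicValInt_unit_mul_pow p hp hu, padicValInt_unit_mul_pow p hp hv] at this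
    subst hmn
    refine ⟨?_, rfl⟩
    have hpne : ((p : ℤ)) ^ m ≠ 0 := pow_ne_zero _ (by exact_mod_cast hp.ne_zero)
    exact mul_right_cancel₀ hpne h
  · rintro ⟨rfl, rfl⟩; rfl

theorem antiderivative_criterion (p : ℕ) (hp : p.Prime)
    (a₀ : ℤ) (ℓ₀ : ℕ) (ha₀ : ¬ (p : ℤ) ∣ a₀) (hℓ₀ : 0 < ℓ₀)
    (a : ℤ) (b k : ℕ) (ha0 : a ≠ 0) (ha : ¬ (p : ℤ) ∣ a) (hb : 0 < b) (hbp : ¬ p ∣ b) :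
    Dp p (a * (p : ℤ) ^ (b * p ^ k)) = a₀ * (p : ℤ) ^ ℓ₀ ↔
      (a * b = a₀ ∧ b * p ^ k + k - 1 = ℓ₀) := by
  have hn : 1 ≤ b * p ^ k := Nat.one_le_iff_ne_zero.mpr
    (Nat.mul_ne_zero hb.ne' (pow_ne_zero _ hp.ne_zero))
  set n := b * p ^ k with hndef
  have hdiv : a * (p : ℤ) ^ n / p = a * (p : ℤ) ^ (n - 1) := by
    have : a * (p : ℤ) ^ n = a * (p : ℤ) ^ (n - 1) * p := by
      rw [mul_assoc, ← pow_succ, Nat.sub_add_cancel hn]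
    rw [this, Int.mul_ediv_cancel _ (by exact_mod_cast hp.ne_zero)]
  have hval : padicValInt p (a * (p : ℤ) ^ n) = n := padicValInt_unit_mul_pow p hp ha n
  have hDp : Dp p (a * (p : ℤ) ^ n) = (a * b) * (p : ℤ) ^ (n + k - 1) := by
    rw [Dp, hdiv, hval]
    have : ((n : ℤ)) = (b : ℤ) * (p : ℤ) ^ k := by rw [hndef]; push_cast; ring
    rw [this]
    have hexp : n + k - 1 = (n - 1) + k := by omega
    rw [hexp, pow_add]; ring
  rw [hDp]
  have hab : ¬ (p : ℤ) ∣ (a * b) := by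
    intro h
    rcases (Int.Prime.dvd_mul' (by exact_mod_cast hp) h) with h' | h'
    · exact ha h'
    · exact hbp (by exact_mod_cast h')
  rw [unit_mul_pow_eq_iff p hp hab ha₀]
end

section
/- Let x_0 = a_0·p^{b_0·p^{k_0}} be in standard form and suppose x_0 is a primitive anti-partial derivative of y = D_p(x_0) (i.e., no anti-partial derivative of y in standard form has a smaller exponent k). Define C = {c ∈ [0, b_0) ∩ ℤ : p^{p^{k_0}·c} exactly divides b_0 − c, and (b_0 − c)/p^{p^{k_0}·c} divides a_0·b_0}. Then the map sending c ∈ C to x = a·p^{b·p^k}, where k = p^{k_0}·c + k_0, b = (b_0 − c)/p^{p^{k_0}·c}, and a = a_0·b_0/b, is a bijection from C onto the set of all integral anti-partial derivatives of y. -/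
section helpers
variable {p : ℕ}

lemma prime_int (hp : p.Prime) : Prime (p : ℤ) :=
  Int.prime_iff_natAbs_prime.mpr (by simpa using hp)

lemma val_unit_mul_pow (hp : p.Prime) {a : ℤ} (ha : ¬ (p:ℤ) ∣ a) (n : ℕ) :
    padicValInt p (a * (p:ℤ)^n) = n := by
  haveI : Fact p.Prime := ⟨hp⟩
  have ha0 : a ≠ 0 := by rintro rfl; exact ha (dvd_zero _)
  have hpz : ((p:ℤ))^n ≠ 0 := pow_ne_zero _ (by exact_mod_cast hp.ne_zero)
  rw [padicValInt.mul ha0 hpz]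
  have h1 : padicValInt p a = 0 := by
    by_contra h
    have : ((p:ℤ))^1 ∣ a := by
      rw [padicValInt_dvd_iff]
      exact Or.inr (by omega)
    exact ha (by simpa using this)
  have h2 : padicValInt p ((p:ℤ)^n) = n := by
    unfold padicValInt
    rw [Int.natAbs_pow, Int.natAbs_natCast, padicValNat.prime_pow]
  omega

lemma unit_pow_inj (hp : p.Prime) {a₁ a₂ : ℤ} {n₁ n₂ : ℕ}
    (h1 : ¬ (p:ℤ) ∣ a₁) (h2 : ¬ (p:ℤ) ∣ a₂)
    (h : a₁ * (p:ℤ)^n₁ = a₂ * (p:ℤ)^n₂) : a₁ = a₂ ∧ n₁ = n₂ := by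
  have hn : n₁ = n₂ := by
    have := congrArg (padicValInt p) h
    rwa [val_unit_mul_pow hp h1, val_unit_mul_pow hp h2] at this
  subst hn
  exact ⟨mul_right_cancel₀ (pow_ne_zero _ (Int.natCast_ne_zero.mpr hp.ne_zero)) h, rfl⟩

lemma Dp_unit_pow (hp : p.Prime) {a : ℤ} (ha : ¬ (p:ℤ) ∣ a) {m : ℕ} (hm : 0 < m) :
    Dp p (a * (p:ℤ)^m) = a * m * (p:ℤ)^(m-1) := by
  obtain ⟨n, rfl⟩ : ∃ n, m = n + 1 := ⟨m - 1, by omega⟩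
  unfold Dp
  rw [val_unit_mul_pow hp ha]
  have hpz : (p:ℤ) ≠ 0 := Int.natCast_ne_zero.mpr hp.ne_zero
  rw [pow_succ, ← mul_assoc, Int.mul_ediv_cancel _ hpz]
  simp only [Nat.add_sub_cancel]
  ring

lemma Dp_std (hp : p.Prime) {a : ℤ} (ha : ¬ (p:ℤ) ∣ a) {b k : ℕ} (hb : 0 < b) :
    Dp p (a * (p:ℤ)^(b * p^k)) = (a * b) * (p:ℤ)^(k + b * p^k - 1) := by
  have hpk : 0 < p ^ k := pow_pos hp.pos k
  have hm : 0 < b * p ^ k := Nat.mul_pos hb hpk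
  rw [Dp_unit_pow hp ha hm]
  have he : k + b * p ^ k - 1 = k + (b * p ^ k - 1) := by omega
  rw [he, pow_add]
  push_cast
  ring

end helpers

theorem antiderivatives_bijection (p : ℕ) (hp : p.Prime)
    (a₀ : ℤ) (b₀ k₀ : ℕ)
    (ha₀0 : a₀ ≠ 0) (ha₀ : ¬ (p : ℤ) ∣ a₀) (hb₀ : 0 < b₀) (hb₀p : ¬ p ∣ b₀)
    -- primitivity: every standard-form anti-partial derivative of y has exponent k ≥ k₀
    (hprim : ∀ (a : ℤ) (b k : ℕ), a ≠ 0 → ¬ (p : ℤ) ∣ a → 0 < b → ¬ p ∣ b →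
      Dp p (a * (p : ℤ) ^ (b * p ^ k)) = Dp p (a₀ * (p : ℤ) ^ (b₀ * p ^ k₀)) → k₀ ≤ k) :
    Set.BijOn
      (fun c : ℕ =>
        (a₀ * b₀ / ((b₀ - c) / p ^ (p ^ k₀ * c) : ℕ)) *
          (p : ℤ) ^ (((b₀ - c) / p ^ (p ^ k₀ * c)) * p ^ (p ^ k₀ * c + k₀)))
      {c : ℕ | c < b₀ ∧ p ^ (p ^ k₀ * c) ∣ (b₀ - c) ∧ ¬ p ^ (p ^ k₀ * c + 1) ∣ (b₀ - c) ∧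
        (((b₀ - c) / p ^ (p ^ k₀ * c) : ℕ) : ℤ) ∣ a₀ * b₀}
      {x : ℤ | Dp p x = Dp p (a₀ * (p : ℤ) ^ (b₀ * p ^ k₀))} := by
  haveI : Fact p.Prime := ⟨hp⟩
  have hpz : (p:ℤ) ≠ 0 := Int.natCast_ne_zero.mpr hp.ne_zero
  have hpzp : Prime (p:ℤ) := prime_int hp
  have hab₀ : ¬ (p:ℤ) ∣ (a₀ * (b₀ : ℤ)) := by
    intro h
    rcases hpzp.dvd_mul.mp h with h | h
    · exact ha₀ h
    · exact hb₀p (by exact_mod_cast h)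
  -- key facts about elements of C
  have hC : ∀ c : ℕ, c < b₀ → p ^ (p ^ k₀ * c) ∣ (b₀ - c) → ¬ p ^ (p ^ k₀ * c + 1) ∣ (b₀ - c) →
      (((b₀ - c) / p ^ (p ^ k₀ * c) : ℕ) : ℤ) ∣ a₀ * b₀ →
      Dp p ((a₀ * b₀ / ((b₀ - c) / p ^ (p ^ k₀ * c) : ℕ)) *
          (p : ℤ) ^ (((b₀ - c) / p ^ (p ^ k₀ * c)) * p ^ (p ^ k₀ * c + k₀)))
        = Dp p (a₀ * (p : ℤ) ^ (b₀ * p ^ k₀)) ∧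
      padicValInt p ((a₀ * b₀ / ((b₀ - c) / p ^ (p ^ k₀ * c) : ℕ)) *
          (p : ℤ) ^ (((b₀ - c) / p ^ (p ^ k₀ * c)) * p ^ (p ^ k₀ * c + k₀)))
        = (b₀ - c) * p ^ k₀ := by
    intro c hc hd hnd hdvd
    set J := p ^ k₀ * c with hJ
    set b := (b₀ - c) / p ^ J with hbdef
    have hbJ : b * p ^ J = b₀ - c := Nat.div_mul_cancel hd
    have hpJ : 0 < p ^ J := pow_pos hp.pos J
    have hbpos : 0 < b := by
      rcases Nat.eq_zero_or_pos b with h | h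
      · exfalso; rw [h, zero_mul] at hbJ; omega
      · exact h
    have hpb : ¬ p ∣ b := by
      intro h
      apply hnd
      have : p ^ J * p ∣ p ^ J * b := mul_dvd_mul_left _ h
      rw [mul_comm (p ^ J) b, hbJ] at this
      rwa [pow_succ]
    have hab : (a₀ * b₀ / (b : ℤ)) * b = a₀ * b₀ := Int.ediv_mul_cancel hdvd
    have hane : ¬ (p:ℤ) ∣ (a₀ * b₀ / (b : ℤ)) := by
      intro h
      apply hab₀
      have := h.mul_right (b : ℤ)
      rwa [hab] at this
    have hD1 := Dp_std hp hane (b := b) (k := J + k₀) hbpos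
    have hD0 := Dp_std hp ha₀ (b := b₀) (k := k₀) hb₀
    have e1 : b * p ^ (J + k₀) = (b₀ - c) * p ^ k₀ := by
      rw [pow_add, ← mul_assoc, hbJ]
    have e2 : (b₀ - c) * p ^ k₀ = b₀ * p ^ k₀ - c * p ^ k₀ := Nat.sub_mul _ _ _
    have e3 : c * p ^ k₀ = J := mul_comm _ _
    have e4 : c * p ^ k₀ ≤ b₀ * p ^ k₀ := Nat.mul_le_mul_right _ (le_of_lt hc)
    have hm0 : 0 < b₀ * p ^ k₀ := Nat.mul_pos hb₀ (pow_pos hp.pos _)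
    have hm1 : 0 < b * p ^ (J + k₀) := Nat.mul_pos hbpos (pow_pos hp.pos _)
    have hexp : (J + k₀) + b * p ^ (J + k₀) - 1 = k₀ + b₀ * p ^ k₀ - 1 := by omega
    constructor
    · rw [hD1, hD0, hexp, hab]
    · rw [val_unit_mul_pow hp hane, e1]
  constructor
  · -- MapsTo
    rintro c ⟨h1, h2, h3, h4⟩
    exact (hC c h1 h2 h3 h4).1
  constructor
  · -- InjOn
    rintro c₁ ⟨h1, h2, h3, h4⟩ c₂ ⟨h1', h2', h3', h4'⟩ heq
    have v1 := (hC c₁ h1 h2 h3 h4).2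
    have v2 := (hC c₂ h1' h2' h3' h4').2
    simp only at heq
    have hv := congrArg (padicValInt p) heq
    rw [v1, v2] at hv
    have hk : 0 < p ^ k₀ := pow_pos hp.pos _
    have : b₀ - c₁ = b₀ - c₂ := Nat.eq_of_mul_eq_mul_right hk hv
    omega
  · -- SurjOn
    rintro x hx
    simp only [Set.mem_setOf_eq] at hx
    have hy := Dp_std hp ha₀ (b := b₀) (k := k₀) hb₀
    have hb₀z : (b₀ : ℤ) ≠ 0 := Int.natCast_ne_zero.mpr hb₀.ne'
    have hy0 : Dp p x ≠ 0 := by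
      rw [hx, hy]
      exact mul_ne_zero (mul_ne_zero ha₀0 hb₀z) (pow_ne_zero _ hpz)
    have hx0 : x ≠ 0 := by rintro rfl; simp [Dp] at hy0
    set v := padicValInt p x with hv
    have hvpos : 0 < v := by
      rcases Nat.eq_zero_or_pos v with h | h
      · exfalso; apply hy0; unfold Dp; rw [← hv, h]; simp
      · exact h
    obtain ⟨A, hA⟩ := padicValInt_dvd (p := p) x
    have hxA : x = A * (p:ℤ) ^ v := by rw [hA]; ring
    have hA0 : A ≠ 0 := by rintro rfl; rw [mul_zero] at hA; exact hx0 hA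
    have hpA : ¬ (p:ℤ) ∣ A := by
      intro hdA
      have : (p:ℤ) ^ (v + 1) ∣ x := by
        rw [hxA, pow_succ, mul_comm A]
        exact mul_dvd_mul_left _ hdA
      rw [padicValInt_dvd_iff] at this
      rcases this with h | h
      · exact hx0 h
      · omega
    set k := padicValNat p v with hk
    set b := v / p ^ k with hbdef
    have hpkdvd : p ^ k ∣ v := pow_padicValNat_dvd
    have hbv : b * p ^ k = v := Nat.div_mul_cancel hpkdvd
    have hbpos : 0 < b := by
      rcases Nat.eq_zero_or_pos b with h | h
      · exfalso; rw [h, zero_mul] at hbv; omega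
      · exact h
    have hpb : ¬ p ∣ b := by
      intro h
      have : p ^ (k + 1) ∣ v := by
        rw [← hbv, pow_succ, mul_comm b]
        exact mul_dvd_mul_left _ h
      exact pow_succ_padicValNat_not_dvd hvpos.ne' this
    have hDx : Dp p (A * (p:ℤ) ^ (b * p ^ k)) = Dp p (a₀ * (p : ℤ) ^ (b₀ * p ^ k₀)) := by
      rw [hbv, ← hxA]; exact hx
    have hk₀k : k₀ ≤ k := hprim A b k hA0 hpA hbpos hpb hDx
    have hAb : ¬ (p:ℤ) ∣ (A * (b : ℤ)) := by
      intro h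
      rcases hpzp.dvd_mul.mp h with h | h
      · exact hpA h
      · exact hpb (by exact_mod_cast h)
    have hDx' := hDx
    rw [Dp_std hp hpA hbpos, Dp_std hp ha₀ hb₀] at hDx'
    obtain ⟨hprod, hexp⟩ := unit_pow_inj hp hAb hab₀ hDx'
    set j := k - k₀ with hj
    have hkeq : k = k₀ + j := by omega
    have e2 : b * p ^ k = b * p ^ j * p ^ k₀ := by
      rw [hkeq, add_comm k₀ j, pow_add, mul_assoc]
    have hm0 : 0 < b₀ * p ^ k₀ := Nat.mul_pos hb₀ (pow_pos hp.pos _)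
    have hm1 : 0 < b * p ^ k := Nat.mul_pos hbpos (pow_pos hp.pos _)
    have hXpos : 0 < b * p ^ j := Nat.mul_pos hbpos (pow_pos hp.pos _)
    have hpk₀ : 0 < p ^ k₀ := pow_pos hp.pos _
    -- k + b*p^k = k₀ + b₀*p^k₀
    have E1 : j + b * p ^ j * p ^ k₀ = b₀ * p ^ k₀ := by omega
    have hXle : b * p ^ j ≤ b₀ := by
      by_contra h
      push_neg at h
      have : b₀ * p ^ k₀ < b * p ^ j * p ^ k₀ := (Nat.mul_lt_mul_right hpk₀).mpr h
      omega
    set c := b₀ - b * p ^ j with hc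
    have hcb : b₀ - c = b * p ^ j := by omega
    have hcj : p ^ k₀ * c = j := by
      rw [mul_comm, hc, Nat.sub_mul]
      omega
    have hclt : c < b₀ := by omega
    have hpj : 0 < p ^ j := pow_pos hp.pos _
    have hquot : (b₀ - c) / p ^ (p ^ k₀ * c) = b := by
      rw [hcj, hcb, Nat.mul_div_cancel _ hpj]
    refine ⟨c, ⟨hclt, ?_, ?_, ?_⟩, ?_⟩
    · rw [hcj, hcb]; exact Dvd.intro_left _ rfl
    · rw [hcj, hcb]
      intro h
      apply hpb
      rw [pow_succ, mul_comm b (p ^ j)] at h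
      exact (Nat.mul_dvd_mul_iff_left hpj).mp h
    · rw [hquot]
      exact ⟨A, by rw [← hprod]; ring⟩
    · simp only [hcj, hcb, Nat.mul_div_cancel _ hpj]
      have ha' : a₀ * (b₀ : ℤ) / (b : ℤ) = A := by
        rw [← hprod, mul_comm A (b:ℤ), Int.mul_ediv_cancel_left _ (Int.natCast_ne_zero.mpr hbpos.ne')]
      rw [ha', show j + k₀ = k from by omega, hbv, ← hxA]
end
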